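/- Let m and d be natural numbers and let X be a topological d-manifold, i.e., a topological space equipped with a charted space structure modeled on Euclidean space ℝ^d (an atlas of partial homeomorphisms onto open subsets of ℝ^d covering X). Then the cup construction P(m, X), the quotient of S^m × X × X by (u, x, y) ∼ (−u, y, x), admits a charted space structure modeled on Euclidean space ℝ^{m+2d}; that is, P(m, X) is locally Euclidean of dimension m + 2d. -/

import Mathlib

/-- The cup construction `P(m, X)`: the quotient of `S^m × X × X` by the relation
`(u, x, y) ∼ (−u, y, x)`, where `S^m` is the unit sphere in `ℝ^{m+1}`. -/
def CupConstruction (m : ℕ) (X : Type*) [TopologicalSpace X] : Type _ :=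
  Quot (fun p q : Metric.sphere (0 : EuclideanSpace ℝ (Fin (m + 1))) 1 × X × X =>
    q = (-p.1, p.2.2, p.2.1))

noncomputable instance (m : ℕ) (X : Type*) [TopologicalSpace X] :
    TopologicalSpace (CupConstruction m X) :=
  instTopologicalSpaceQuot

section CupAux

open Set Function Metric

variable {m : ℕ} {X : Type*} [TopologicalSpace X]

/-- The total space of the cup construction. -/
abbrev CupTotal (m : ℕ) (X : Type*) : Type _ :=
  Metric.sphere (0 : EuclideanSpace ℝ (Fin (m + 1))) 1 × X × X

/-- The flipping involution. -/
noncomputable def cupFlip (z : CupTotal m X) : CupTotal m X := (-z.1, z.2.2, z.2.1)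

lemma cupFlip_flip (z : CupTotal m X) : cupFlip (cupFlip z) = z := by
  simp [cupFlip]

lemma cupFlip_continuous : Continuous (cupFlip (m := m) (X := X)) :=
  (continuous_fst.neg).prodMk (continuous_snd.snd.prodMk continuous_snd.fst)

/-- The quotient map of the cup construction. -/
def cupMk : CupTotal m X → CupConstruction m X :=
  Quot.mk _

lemma cupMk_continuous : Continuous (cupMk (m := m) (X := X)) :=
  continuous_quot_mk

lemma cupMk_surjective : Function.Surjective (cupMk (m := m) (X := X)) :=
  Quot.exists_rep

lemma cupMk_eq_iff {a b : CupTotal m X} :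
    cupMk a = cupMk b ↔ a = b ∨ b = cupFlip a := by
  constructor
  · intro h
    have h' := Quot.eqvGen_exact h
    clear h
    induction h' with
    | rel x y hxy => exact Or.inr hxy
    | refl x => exact Or.inl rfl
    | symm x y _ ih =>
        rcases ih with rfl | h1
        · exact Or.inl rfl
        · subst h1; exact Or.inr (cupFlip_flip x).symm
    | trans x y z _ _ ih1 ih2 =>
        rcases ih1 with rfl | h1
        · exact ih2
        · rcases ih2 with rfl | h2
          · exact Or.inr h1
          · subst h1; subst h2; exact Or.inl (cupFlip_flip x).symm
  · rintro (rfl | h)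
    · rfl
    · exact Quot.sound h

lemma cupMk_flip (z : CupTotal m X) : cupMk (cupFlip z) = cupMk z :=
  (cupMk_eq_iff.2 (Or.inr (cupFlip_flip z).symm))

lemma isOpenMap_cupMk : IsOpenMap (cupMk (m := m) (X := X)) := by
  intro U hU
  have key : cupMk ⁻¹' (cupMk '' U) = U ∪ cupFlip ⁻¹' U := by
    ext z
    simp only [mem_preimage, mem_image, mem_union]
    constructor
    · rintro ⟨w, hw, h⟩
      rcases cupMk_eq_iff.1 h with rfl | h1
      · exact Or.inl hw
      · right
        have : w = cupFlip z := by rw [h1, cupFlip_flip]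
        rwa [← this]
    · rintro (hz | hz)
      · exact ⟨z, hz, rfl⟩
      · exact ⟨cupFlip z, hz, cupMk_flip z⟩
  have : IsOpen (cupMk ⁻¹' (cupMk '' U)) := by
    rw [key]; exact hU.union (hU.preimage cupFlip_continuous)
  exact isQuotientMap_quot_mk.isOpen_preimage.1 this

/-- The hemisphere neighbourhood around a point of the total space. -/
def cupNbhd (p : CupTotal m X) : Set (CupTotal m X) :=
  {z | (0 : ℝ) < inner ℝ (z.1 : EuclideanSpace ℝ (Fin (m + 1)))
    (p.1 : EuclideanSpace ℝ (Fin (m + 1)))}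

lemma isOpen_cupNbhd (p : CupTotal m X) : IsOpen (cupNbhd p) :=
  isOpen_lt continuous_const
    (Continuous.inner (continuous_subtype_val.comp continuous_fst) continuous_const)

lemma mem_cupNbhd_self (p : CupTotal m X) : p ∈ cupNbhd p := by
  simp only [cupNbhd, Set.mem_setOf_eq]
  have h1 : ‖(p.1 : EuclideanSpace ℝ (Fin (m + 1)))‖ = 1 :=
    mem_sphere_zero_iff_norm.1 p.1.2
  have : inner ℝ (p.1 : EuclideanSpace ℝ (Fin (m + 1))) (p.1 : EuclideanSpace ℝ (Fin (m + 1)))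
      = (1 : ℝ) := by
    rw [real_inner_self_eq_norm_sq, h1]; norm_num
  rw [this]; norm_num

lemma cupMk_injOn (p : CupTotal m X) : Set.InjOn cupMk (cupNbhd p) := by
  intro a ha b hb hab
  simp only [cupNbhd, Set.mem_setOf_eq] at ha hb
  rcases cupMk_eq_iff.1 hab with h | h
  · exact h
  · exfalso
    have hcoe : ((b.1 : Metric.sphere (0 : EuclideanSpace ℝ (Fin (m + 1))) 1) :
        EuclideanSpace ℝ (Fin (m + 1))) = -(a.1 : EuclideanSpace ℝ (Fin (m + 1))) := by
      rw [h]; rfl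
    have ha' : (0 : ℝ) < inner ℝ (a.1 : EuclideanSpace ℝ (Fin (m + 1))) (p.1 :
        EuclideanSpace ℝ (Fin (m + 1))) := ha
    have hb' : (0 : ℝ) < inner ℝ (b.1 : EuclideanSpace ℝ (Fin (m + 1))) (p.1 :
        EuclideanSpace ℝ (Fin (m + 1))) := hb
    rw [hcoe, inner_neg_left] at hb'
    linarith

variable [Nonempty X]

instance : Nonempty (CupTotal m X) := by
  have : (Metric.sphere (0 : EuclideanSpace ℝ (Fin (m + 1))) 1).Nonempty :=
    NormedSpace.sphere_nonempty.2 zero_le_one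
  have := this.to_subtype
  infer_instance

/-- The local chart of the cup construction to the total space: a partial homeomorphism
inverting the quotient map over the hemisphere around `p`. -/
noncomputable def cupChartAux (p : CupTotal m X) :
    OpenPartialHomeomorph (CupConstruction m X) (CupTotal m X) where
  toFun := Function.invFunOn cupMk (cupNbhd p)
  invFun := cupMk
  source := cupMk '' cupNbhd p
  target := cupNbhd p
  map_source' q hq := Function.invFunOn_mem hq
  map_target' z hz := Set.mem_image_of_mem _ hz
  left_inv' q hq := Function.invFunOn_eq hq
  right_inv' z hz := (cupMk_injOn p).leftInvOn_invFunOn hz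
  open_source := isOpenMap_cupMk _ (isOpen_cupNbhd p)
  open_target := isOpen_cupNbhd p
  continuousOn_toFun := by
    rw [_root_.continuousOn_iff']
    intro W hW
    refine ⟨cupMk '' (W ∩ cupNbhd p), isOpenMap_cupMk _ (hW.inter (isOpen_cupNbhd p)), ?_⟩
    ext q
    simp only [Set.mem_inter_iff, Set.mem_preimage]
    constructor
    · rintro ⟨hqW, hq⟩
      have hmem : Function.invFunOn cupMk (cupNbhd p) q ∈ cupNbhd p :=
        Function.invFunOn_mem hq
      have heq : cupMk (Function.invFunOn cupMk (cupNbhd p) q) = q :=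
        Function.invFunOn_eq hq
      exact ⟨⟨Function.invFunOn cupMk (cupNbhd p) q, ⟨hqW, hmem⟩, heq⟩, hq⟩
    · rintro ⟨⟨z, ⟨hzW, hzV⟩, rfl⟩, hq⟩
      refine ⟨?_, hq⟩
      show Function.invFunOn cupMk (cupNbhd p) (cupMk z) ∈ W
      rw [(cupMk_injOn p).leftInvOn_invFunOn hzV]
      exact hzW
  continuousOn_invFun := cupMk_continuous.continuousOn

variable {d : ℕ} [ChartedSpace (EuclideanSpace ℝ (Fin d)) X]

/-- The cup construction is a charted space over the product model. -/
noncomputable def cupChartedSpaceAux :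
    ChartedSpace (ModelProd (EuclideanSpace ℝ (Fin m))
      (ModelProd (EuclideanSpace ℝ (Fin d)) (EuclideanSpace ℝ (Fin d))))
      (CupConstruction m X) where
  atlas := Set.range fun p : CupTotal m X =>
    (cupChartAux p).trans (chartAt _ p)
  chartAt q := (cupChartAux (Quot.out q)).trans (chartAt _ (Quot.out q))
  mem_chart_source q := by
    set p := Quot.out q with hp
    have hq : cupMk p = q := Quot.out_eq q
    rw [OpenPartialHomeomorph.trans_source]
    constructor
    · exact ⟨p, mem_cupNbhd_self p, hq⟩
    · have : (cupChartAux p) q = p := by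
        have : (cupChartAux p) (cupMk p) = p :=
          (cupMk_injOn p).leftInvOn_invFunOn (mem_cupNbhd_self p)
        rwa [hq] at this
      simp only [Set.mem_preimage, this]
      exact mem_chart_source _ p
  chart_mem_atlas q := Set.mem_range_self _

end CupAux

/-- If `X` is a topological `d`-manifold, i.e. a charted space modeled on `ℝ^d`, then the
cup construction `P(m, X)` admits a charted space structure modeled on `ℝ^{m+2d}`;
in other words, `P(m, X)` is locally Euclidean of dimension `m + 2d`. -/
theorem cupConstruction_chartedSpace (m d : ℕ) (X : Type*) [TopologicalSpace X]
    [ChartedSpace (EuclideanSpace ℝ (Fin d)) X] :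
    Nonempty (ChartedSpace (EuclideanSpace ℝ (Fin (m + 2 * d))) (CupConstruction m X)) := by
  rcases isEmpty_or_nonempty X with hX | hX
  · have : IsEmpty (CupConstruction m X) :=
      ⟨fun q => by obtain ⟨z, rfl⟩ := Quot.exists_rep q; exact hX.false z.2.1⟩
    exact ⟨ChartedSpace.empty _ _⟩
  · letI : ChartedSpace (ModelProd (EuclideanSpace ℝ (Fin m))
        (ModelProd (EuclideanSpace ℝ (Fin d)) (EuclideanSpace ℝ (Fin d))))
        (CupConstruction m X) :=
      cupChartedSpaceAux
    have hrank : Module.finrank ℝ (EuclideanSpace ℝ (Fin m) ×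
        (EuclideanSpace ℝ (Fin d) × EuclideanSpace ℝ (Fin d)))
        = Module.finrank ℝ (EuclideanSpace ℝ (Fin (m + 2 * d))) := by
      simp [Module.finrank_prod, finrank_euclideanSpace_fin]
      ring
    let e : (EuclideanSpace ℝ (Fin m) ×
        (EuclideanSpace ℝ (Fin d) × EuclideanSpace ℝ (Fin d)))
        ≃L[ℝ] EuclideanSpace ℝ (Fin (m + 2 * d)) :=
      ContinuousLinearEquiv.ofFinrankEq hrank
    letI : ChartedSpace (EuclideanSpace ℝ (Fin (m + 2 * d)))
        (ModelProd (EuclideanSpace ℝ (Fin m))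
          (ModelProd (EuclideanSpace ℝ (Fin d)) (EuclideanSpace ℝ (Fin d)))) :=
      e.toHomeomorph.toOpenPartialHomeomorph.singletonChartedSpace rfl
    exact ⟨ChartedSpace.comp _ (ModelProd (EuclideanSpace ℝ (Fin m))
      (ModelProd (EuclideanSpace ℝ (Fin d)) (EuclideanSpace ℝ (Fin d)))) _⟩
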